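/- Let E = [[I_q,0],[0,0]] ∈ ℝ^{l×n} and Ẽ = [[I_{q̃},0],[0,0]] ∈ ℝ^{l×n}. Suppose Q ∈ GL(l,ℝ) and P ∈ GL(n,ℝ) satisfy Ẽ = Q E P⁻¹. Write Q = [[Q₁,Q₂],[Q₃,Q₄]] with Q₁ ∈ ℝ^{q̃×q̃} and P⁻¹ = [[P₁,P₂],[P₃,P₄]] with P₁ ∈ ℝ^{q×q}. Then q = q̃, P₂ = 0, Q₃ = 0, Q₁P₁ = I, and consequently Q₁, P₁, Q₄, P₄ are all invertible. -/
import Mathlib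

open Matrix

/-- The `m × k` "inclusion" matrix. -/
def Jinc (m k : ℕ) : Matrix (Fin m) (Fin k) ℝ :=
  Matrix.of fun i j => if (i : ℕ) = (j : ℕ) then 1 else 0

lemma mulJ {ι : Type*} [Fintype ι] (m k : ℕ) (h : k ≤ m) (A : Matrix ι (Fin m) ℝ) :
    A * Jinc m k = A.submatrix id (Fin.castLE h) := by
  ext i t
  rw [mul_apply, Finset.sum_eq_single (Fin.castLE h t)]
  · simp [Jinc]
  · intro b _ hb
    have hbt : ¬ ((b : ℕ) = (t : ℕ)) := fun hc => hb (Fin.ext (by simpa using hc))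
    simp [Jinc, hbt]
  · simp

lemma Jmul {ι : Type*} [Fintype ι] (m k : ℕ) (h : k ≤ m) (B : Matrix (Fin m) ι ℝ) :
    (Jinc m k)ᵀ * B = B.submatrix (Fin.castLE h) id := by
  ext t i
  rw [mul_apply, Finset.sum_eq_single (Fin.castLE h t)]
  · simp [Jinc]
  · intro b _ hb
    have hbt : ¬ ((b : ℕ) = (t : ℕ)) := fun hc => hb (Fin.ext (by simpa using hc))
    simp [Jinc, hbt]
  · simp

lemma JTJ (m k : ℕ) (h : k ≤ m) : (Jinc m k)ᵀ * Jinc m k = 1 := by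
  rw [Jmul m k h]
  ext a b
  simp [Jinc, one_apply, Fin.ext_iff]

lemma J_decomp (l n q : ℕ) (hql : q ≤ l) (hqn : q ≤ n) :
    Jinc l q * (Jinc n q)ᵀ =
      Matrix.of fun (i : Fin l) (j : Fin n) =>
        if (i : ℕ) = (j : ℕ) ∧ (i : ℕ) < q then (1 : ℝ) else 0 := by
  ext i j
  simp only [of_apply]
  rw [mul_apply]
  by_cases hc : (i : ℕ) = (j : ℕ) ∧ (i : ℕ) < q
  · obtain ⟨hij, hiq⟩ := hc
    rw [if_pos ⟨hij, hiq⟩, Finset.sum_eq_single (⟨(i : ℕ), hiq⟩ : Fin q)]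
    · show (if (i : ℕ) = (i : ℕ) then (1:ℝ) else 0) * (if (j : ℕ) = (i : ℕ) then (1:ℝ) else 0) = 1
      rw [if_pos rfl, if_pos hij.symm, one_mul]
    · intro b _ hb
      have hbt : ¬ ((i : ℕ) = (b : ℕ)) := by
        intro hc'; exact hb (Fin.ext (by simpa using hc'.symm))
      simp [Jinc, hbt]
    · simp
  · rw [if_neg hc]
    apply Finset.sum_eq_zero
    intro t _
    by_cases hit : (i : ℕ) = (t : ℕ)
    · have hjt : ¬ ((j : ℕ) = (t : ℕ)) := by
        intro hc'
        exact hc ⟨by omega, by omega⟩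
      simp [Jinc, hjt]
    · simp [Jinc, hit]

lemma corner_rank (l n q : ℕ) (hql : q ≤ l) (hqn : q ≤ n) :
    (Matrix.of fun (i : Fin l) (j : Fin n) =>
      if (i : ℕ) = (j : ℕ) ∧ (i : ℕ) < q then (1 : ℝ) else 0).rank = q := by
  rw [← J_decomp l n q hql hqn]
  apply le_antisymm
  · exact (rank_mul_le_left _ _).trans ((rank_le_card_width _).trans (by simp))
  · have h1 : (Jinc l q)ᵀ * (Jinc l q * (Jinc n q)ᵀ) * Jinc n q = 1 := by
      rw [← Matrix.mul_assoc, JTJ l q hql, Matrix.one_mul, JTJ n q hqn]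
    calc q = (1 : Matrix (Fin q) (Fin q) ℝ).rank := by simp [rank_one]
      _ = ((Jinc l q)ᵀ * (Jinc l q * (Jinc n q)ᵀ) * Jinc n q).rank := by rw [h1]
      _ ≤ _ := (rank_mul_le_left _ _).trans (rank_mul_le_right _ _)

/-- If `Ẽ = Q E P⁻¹` with `E = [[I_q,0],[0,0]]`, `Ẽ = [[I_q̃,0],[0,0]]`, `Q, P` invertible, then
`q = q̃`, the blocks `P₂` and `Q₃` vanish, `Q₁ P₁ = I`, and the corner blocks
`Q₁, P₁, Q₄, P₄` are invertible. -/
theorem stmt16 (l n q qt : ℕ) (hql : q ≤ l) (hqn : q ≤ n) (hqtl : qt ≤ l) (hqtn : qt ≤ n)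
    (E Et : Matrix (Fin l) (Fin n) ℝ)
    (hE : E = Matrix.of fun (i : Fin l) (j : Fin n) => if (i : ℕ) = (j : ℕ) ∧ (i : ℕ) < q then (1 : ℝ) else 0)
    (hEt : Et = Matrix.of fun (i : Fin l) (j : Fin n) => if (i : ℕ) = (j : ℕ) ∧ (i : ℕ) < qt then (1 : ℝ) else 0)
    (Q : Matrix (Fin l) (Fin l) ℝ) (P : Matrix (Fin n) (Fin n) ℝ)
    (hQ : IsUnit Q) (hP : IsUnit P)
    (heq : Et = Q * E * P⁻¹) :
    q = qt ∧
    (∀ i j : Fin n, (i : ℕ) < q → q ≤ (j : ℕ) → P⁻¹ i j = 0) ∧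
    (∀ i j : Fin l, qt ≤ (i : ℕ) → (j : ℕ) < qt → Q i j = 0) ∧
    (∀ i j : Fin q, ∑ k : Fin q,
        Q (Fin.castLE hql i) (Fin.castLE hql k) * P⁻¹ (Fin.castLE hqn k) (Fin.castLE hqn j) =
      if i = j then 1 else 0) ∧
    IsUnit (Matrix.of fun i j : Fin q => Q (Fin.castLE hql i) (Fin.castLE hql j)) ∧
    IsUnit (Matrix.of fun i j : Fin q => P⁻¹ (Fin.castLE hqn i) (Fin.castLE hqn j)) ∧
    IsUnit (Matrix.of fun i j : Fin (l - q) =>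
      Q (Fin.cast (Nat.add_sub_cancel' hql) (Fin.natAdd q i))
        (Fin.cast (Nat.add_sub_cancel' hql) (Fin.natAdd q j))) ∧
    IsUnit (Matrix.of fun i j : Fin (n - q) =>
      P⁻¹ (Fin.cast (Nat.add_sub_cancel' hqn) (Fin.natAdd q i))
        (Fin.cast (Nat.add_sub_cancel' hqn) (Fin.natAdd q j))) := by
  have hPinv : IsUnit P⁻¹ := Matrix.isUnit_nonsing_inv_iff.mpr hP
  have hdQ : IsUnit Q.det := (Matrix.isUnit_iff_isUnit_det Q).mp hQ
  have hdPinv : IsUnit (P⁻¹).det := (Matrix.isUnit_iff_isUnit_det _).mp hPinv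
  -- q = qt via rank
  have hq : q = qt := by
    have h1 : Et.rank = qt := by rw [hEt]; exact corner_rank l n qt hqtl hqtn
    have h2 : Et.rank = q := by
      rw [heq, rank_mul_eq_left_of_isUnit_det _ _ hdPinv,
        rank_mul_eq_right_of_isUnit_det _ _ hdQ, hE]
      exact corner_rank l n q hql hqn
    omega
  subst hq
  -- key entrywise identity
  have key : ∀ (i : Fin l) (j : Fin n),
      Et i j = ∑ t : Fin q, Q i (Fin.castLE hql t) * P⁻¹ (Fin.castLE hqn t) j := by
    intro i j
    have hfac : Et = (Q * Jinc l q) * ((Jinc n q)ᵀ * P⁻¹) := by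
      rw [heq, hE, ← J_decomp l n q hql hqn]
      simp only [Matrix.mul_assoc]
    rw [hfac, mulJ l q hql, Jmul n q hqn, mul_apply]
    rfl
  set A : Matrix (Fin q) (Fin q) ℝ :=
    Matrix.of fun i j => Q (Fin.castLE hql i) (Fin.castLE hql j) with hA
  set B : Matrix (Fin q) (Fin q) ℝ :=
    Matrix.of fun i j => P⁻¹ (Fin.castLE hqn i) (Fin.castLE hqn j) with hB
  have hAB : A * B = 1 := by
    ext i j
    rw [mul_apply]
    have h := (key (Fin.castLE hql i) (Fin.castLE hqn j)).symm
    rw [hEt] at h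
    simp only [of_apply, Fin.coe_castLE] at h
    show (∑ t : Fin q,
        Q (Fin.castLE hql i) (Fin.castLE hql t) * P⁻¹ (Fin.castLE hqn t) (Fin.castLE hqn j)) =
      (1 : Matrix (Fin q) (Fin q) ℝ) i j
    rw [h, one_apply]
    by_cases hij : i = j
    · rw [if_pos hij, if_pos ⟨by rw [hij], i.isLt⟩]
    · rw [if_neg hij, if_neg (by simp [Fin.ext_iff] at hij ⊢; intro hc; exact absurd hc hij)]
  have hBA : B * A = 1 := mul_eq_one_comm.mp hAB
  have hAunit : IsUnit A := ⟨⟨A, B, hAB, hBA⟩, rfl⟩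
  have hBunit : IsUnit B := ⟨⟨B, A, hBA, hAB⟩, rfl⟩
  -- P₂ = 0
  have hP2 : ∀ i j : Fin n, (i : ℕ) < q → q ≤ (j : ℕ) → P⁻¹ i j = 0 := by
    intro i j hi hj
    set v : Fin q → ℝ := fun t => P⁻¹ (Fin.castLE hqn t) j with hv
    have hAv : A.mulVec v = 0 := by
      funext a
      have h := (key (Fin.castLE hql a) j).symm
      rw [hEt] at h
      simp only [of_apply, Fin.coe_castLE] at h
      rw [if_neg (by rintro ⟨h1, h2⟩; omega)] at h
      show (∑ t : Fin q, Q (Fin.castLE hql a) (Fin.castLE hql t) * P⁻¹ (Fin.castLE hqn t) j) = 0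
      exact h
    have hv0 : v = 0 := by
      calc v = (B * A).mulVec v := by rw [hBA, Matrix.one_mulVec]
        _ = B.mulVec (A.mulVec v) := by rw [Matrix.mulVec_mulVec]
        _ = 0 := by rw [hAv, Matrix.mulVec_zero]
    have : P⁻¹ i j = v ⟨(i : ℕ), hi⟩ := rfl
    rw [this, hv0, Pi.zero_apply]
  -- Q₃ = 0
  have hQ3 : ∀ i j : Fin l, q ≤ (i : ℕ) → (j : ℕ) < q → Q i j = 0 := by
    intro i j hi hj
    set w : Fin q → ℝ := fun t => Q i (Fin.castLE hql t) with hw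
    have hwB : w ᵥ* B = 0 := by
      funext b
      have h := (key i (Fin.castLE hqn b)).symm
      rw [hEt] at h
      simp only [of_apply, Fin.coe_castLE] at h
      rw [if_neg (by rintro ⟨h1, h2⟩; omega)] at h
      show (∑ t : Fin q, Q i (Fin.castLE hql t) * P⁻¹ (Fin.castLE hqn t) (Fin.castLE hqn b)) = 0
      rw [← h]
    have hw0 : w = 0 := by
      calc w = w ᵥ* (B * A) := by rw [hBA, Matrix.vecMul_one]
        _ = (w ᵥ* B) ᵥ* A := by rw [Matrix.vecMul_vecMul]
        _ = 0 := by rw [hwB, Matrix.zero_vecMul]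
    have : Q i j = w ⟨(j : ℕ), hj⟩ := rfl
    rw [this, hw0, Pi.zero_apply]
  -- corner blocks via block determinants
  have hQ4 : IsUnit (Matrix.of fun i j : Fin (l - q) =>
      Q (Fin.cast (Nat.add_sub_cancel' hql) (Fin.natAdd q i))
        (Fin.cast (Nat.add_sub_cancel' hql) (Fin.natAdd q j))) := by
    set e : Fin q ⊕ Fin (l - q) ≃ Fin l :=
      finSumFinEquiv.trans (finCongr (Nat.add_sub_cancel' hql)) with he
    set Q' := Q.submatrix e e with hQ'
    have h21 : Q'.toBlocks₂₁ = 0 := by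
      ext i j
      simp only [hQ', Matrix.toBlocks₂₁, of_apply, submatrix_apply]
      apply hQ3
      · simp [he, finSumFinEquiv]
      · have : ((e (Sum.inl j) : Fin l) : ℕ) = (j : ℕ) := by simp [he, finSumFinEquiv]
        rw [this]; exact j.isLt
    have hdet : Q.det = Q'.toBlocks₁₁.det * Q'.toBlocks₂₂.det := by
      rw [← Matrix.det_submatrix_equiv_self e Q, ← hQ']
      conv_lhs => rw [← Matrix.fromBlocks_toBlocks Q', h21]
      rw [Matrix.det_fromBlocks_zero₂₁]
    have hU : IsUnit Q'.toBlocks₂₂.det := by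
      rw [hdet] at hdQ
      exact isUnit_of_mul_isUnit_right hdQ
    have hEq : (Matrix.of fun i j : Fin (l - q) =>
        Q (Fin.cast (Nat.add_sub_cancel' hql) (Fin.natAdd q i))
          (Fin.cast (Nat.add_sub_cancel' hql) (Fin.natAdd q j))) = Q'.toBlocks₂₂ := by
      ext i j
      simp [hQ', Matrix.toBlocks₂₂, he, finSumFinEquiv]
    rw [hEq]
    exact (Matrix.isUnit_iff_isUnit_det _).mpr hU
  have hP4 : IsUnit (Matrix.of fun i j : Fin (n - q) =>
      P⁻¹ (Fin.cast (Nat.add_sub_cancel' hqn) (Fin.natAdd q i))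
        (Fin.cast (Nat.add_sub_cancel' hqn) (Fin.natAdd q j))) := by
    set e : Fin q ⊕ Fin (n - q) ≃ Fin n :=
      finSumFinEquiv.trans (finCongr (Nat.add_sub_cancel' hqn)) with he
    set P' := (P⁻¹).submatrix e e with hP'
    have h12 : P'.toBlocks₁₂ = 0 := by
      ext i j
      simp only [hP', Matrix.toBlocks₁₂, of_apply, submatrix_apply]
      apply hP2
      · have : ((e (Sum.inl i) : Fin n) : ℕ) = (i : ℕ) := by simp [he, finSumFinEquiv]
        rw [this]; exact i.isLt
      · simp [he, finSumFinEquiv]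
    have hdet : (P⁻¹).det = P'.toBlocks₁₁.det * P'.toBlocks₂₂.det := by
      rw [← Matrix.det_submatrix_equiv_self e P⁻¹, ← hP']
      conv_lhs => rw [← Matrix.fromBlocks_toBlocks P', h12]
      rw [Matrix.det_fromBlocks_zero₁₂]
    have hU : IsUnit P'.toBlocks₂₂.det := by
      rw [hdet] at hdPinv
      exact isUnit_of_mul_isUnit_right hdPinv
    have hEq : (Matrix.of fun i j : Fin (n - q) =>
        P⁻¹ (Fin.cast (Nat.add_sub_cancel' hqn) (Fin.natAdd q i))
          (Fin.cast (Nat.add_sub_cancel' hqn) (Fin.natAdd q j))) = P'.toBlocks₂₂ := by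
      ext i j
      simp [hP', Matrix.toBlocks₂₂, he, finSumFinEquiv]
    rw [hEq]
    exact (Matrix.isUnit_iff_isUnit_det _).mpr hU
  refine ⟨rfl, hP2, hQ3, ?_, hAunit, hBunit, hQ4, hP4⟩
  intro i j
  have h := congrFun (congrFun hAB i) j
  rw [mul_apply, one_apply] at h
  exact h
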